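/- Under Assumption A1, V is a Lyapunov function for the mean field h: for every θ ∈ Θ, ⟨∇V(θ), h(θ)⟩ = −(Σ_{i=1}^d θ⋆(i)/θ(i))^{-1} Σ_{i=1}^d (θ⋆(i) − θ(i))²/θ(i) ≤ 0, and ⟨∇V(θ), h(θ)⟩ = 0 if and only if θ = θ⋆. -/

import Mathlib

open MeasureTheory ProbabilityTheory Filter Set Asymptotics
open scoped ENNReal NNReal Topology ENat

noncomputable section

/-- The weight `θ⋆(i) = ∫_{X_i} π dλ` of the stratum `X_i = idx⁻¹{i}`. -/
def thetaStarW {E : Type*} [MeasurableSpace E] (lam : Measure E) (pdf : E → ℝ)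
    {d : ℕ} (idx : E → Fin d) (i : Fin d) : ℝ :=
  ∫ x in idx ⁻¹' {i}, pdf x ∂lam

/-- The open simplex `Θ` of non-degenerate probability vectors on `{1,…,d}`. -/
def simplexInt (d : ℕ) : Set (Fin d → ℝ) :=
  {t | (∀ i, 0 < t i ∧ t i < 1) ∧ ∑ i, t i = 1}

/-- The biased density `π_θ(x) = (∑ᵢ θ⋆(i)/θ(i))⁻¹ ∑ᵢ (π(x)/θ(i)) 1_{X_i}(x)`. -/
def piB {E : Type*} [MeasurableSpace E] (lam : Measure E) (pdf : E → ℝ)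
    {d : ℕ} (idx : E → Fin d) (t : Fin d → ℝ) (x : E) : ℝ :=
  (∑ i, thetaStarW lam pdf idx i / t i)⁻¹ *
    ∑ i, (pdf x / t i) * (if idx x = i then 1 else 0)

/-- `P` is the symmetric Metropolis-Hastings kernel with proposal density `q`
and target density `pB` with respect to `lam`:
`P(x,dy) = q(x,y) α(x,y) λ(dy) + δ_x(dy) (1 - ∫ q(x,z) α(x,z) λ(dz))`
where `α(x,y) = 1 ∧ (pB(y)/pB(x))`. -/
def IsMHKernel {E : Type*} [MeasurableSpace E] (lam : Measure E) (q : E → E → ℝ)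
    (pB : E → ℝ) (P : Kernel E E) : Prop :=
  ∀ x : E, P x =
    lam.withDensity (fun y => ENNReal.ofReal (q x y * min 1 (pB y / pB x)))
      + (ENNReal.ofReal (1 - ∫ z, q x z * min 1 (pB z / pB x) ∂lam)) • Measure.dirac x

/-- The σ-algebra `F_n = σ(θ₀, X₀, …, X_n)`. -/
def wlSigma {E Ω : Type*} [MeasurableSpace E] {d : ℕ}
    (X : ℕ → Ω → E) (θ : ℕ → Ω → Fin d → ℝ) (n : ℕ) : MeasurableSpace Ω :=
  MeasurableSpace.comap (θ 0) MeasurableSpace.pi ⊔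
    ⨆ k ≤ n, MeasurableSpace.comap (X k) ‹MeasurableSpace E›

/-- The field `H_i(x,θ) = θ(i) (1_{X_i}(x) - θ(I(x)))`. -/
def Hfield {E : Type*} {d : ℕ} (idx : E → Fin d) (x : E) (t : Fin d → ℝ) (i : Fin d) : ℝ :=
  t i * ((if idx x = i then 1 else 0) - t (idx x))

/-- The mean field `h(θ) = ∫ H(x,θ) π_θ(x) λ(dx)`. -/
def meanField {E : Type*} [MeasurableSpace E] (lam : Measure E) (pdf : E → ℝ)
    {d : ℕ} (idx : E → Fin d) (t : Fin d → ℝ) : Fin d → ℝ :=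
  fun i => ∫ x, Hfield idx x t i * piB lam pdf idx t x ∂lam

/-- `i` is the smallest index of a stratum of smallest weight, `i = I_n`. -/
def isLeastMin {d : ℕ} (v : Fin d → ℝ) (i : Fin d) : Prop :=
  (∀ j, v i ≤ v j) ∧ ∀ i', (∀ j, v i' ≤ v j) → i ≤ i'

/-- The successive return times `T_k` of the chain to the stratum of smallest
weight: `T_0 = 0`, `T_k = inf {n > T_{k-1} : X_n ∈ X_{I_n}}` (`= ∞` if empty). -/
def retTime {E Ω : Type*} {d : ℕ} (idx : E → Fin d)
    (X : ℕ → Ω → E) (θ : ℕ → Ω → Fin d → ℝ) : ℕ → Ω → ℕ∞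
  | 0 => fun _ => 0
  | (k+1) => fun ω => sInf {m : ℕ∞ | ∃ n : ℕ, m = (n : ℕ∞) ∧
      retTime idx X θ k ω < (n : ℕ∞) ∧ isLeastMin (θ n ω) (idx (X n ω))}

/-- The (0-based) largest index `i_m - 1` such that the `i_m` smallest weights of `w`
are `< (min_j w(j)) (1+γ₁)/(1-γ₁)`; the increasing reordering `(1)_m, …, (d)_m`
of the weights is realised through the sorting permutation `Tuple.sort w`. -/
def imax0 {d : ℕ} (γ1 : ℝ) (w : Fin d → ℝ) : ℕ :=
  sSup {j : ℕ | ∃ h : j < d, w (Tuple.sort w ⟨j, h⟩) < (⨅ i, w i) * (1 + γ1) / (1 - γ1)}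

/-- The event `A_m = {X_{s+md+1} ∈ X_{(i_m)_m}, X_{s+md+2} ∈ X_{(i_m-1)_m}, …,
X_{s+md+i_m} ∈ X_{(1)_m}}`, where `s = T_k` and `(j)_m` is the increasing
reordering of the weights at time `s + md`. -/
def eventA {E Ω : Type*} {d : ℕ} (idx : E → Fin d) (X : ℕ → Ω → E)
    (θ : ℕ → Ω → Fin d → ℝ) (γ1 : ℝ) (s : Ω → ℕ) (m : ℕ) : Set Ω :=
  {ω | ∀ t : ℕ, t ≤ imax0 γ1 (θ (s ω + m * d) ω) →
    ∀ h : imax0 γ1 (θ (s ω + m * d) ω) - t < d,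
    idx (X (s ω + m * d + 1 + t) ω) =
      Tuple.sort (θ (s ω + m * d) ω) ⟨imax0 γ1 (θ (s ω + m * d) ω) - t, h⟩}

/-- Iterates `P^n` of a Markov kernel. -/
def kIter {E : Type*} [MeasurableSpace E] (κ : Kernel E E) : ℕ → Kernel E E
  | 0 => Kernel.id
  | (n+1) => κ ∘ₖ kIter κ n

/-- The Poisson solution `Ĥ_θ⋆ = ∑_{n≥0} P_θ⋆ⁿ (H(·,θ⋆) - h(θ⋆))`. -/
def poissonH {E : Type*} [MeasurableSpace E] (lam : Measure E) (pdf : E → ℝ)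
    {d : ℕ} (idx : E → Fin d) (P : (Fin d → ℝ) → Kernel E E) (x : E) (i : Fin d) : ℝ :=
  ∑' n : ℕ, ∫ y, (Hfield idx y (thetaStarW lam pdf idx) i
      - meanField lam pdf idx (thetaStarW lam pdf idx) i)
    ∂(kIter (P (thetaStarW lam pdf idx)) n x)

/-- The asymptotic variance-covariance matrix `U⋆`. -/
def Ustar {E : Type*} [MeasurableSpace E] (lam : Measure E) (pdf : E → ℝ)
    {d : ℕ} (idx : E → Fin d) (P : (Fin d → ℝ) → Kernel E E) (i j : Fin d) : ℝ :=
  ∫ x, (poissonH lam pdf idx P x i * poissonH lam pdf idx P x j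
      - (∫ y, poissonH lam pdf idx P y i ∂(P (thetaStarW lam pdf idx) x)) *
        (∫ y, poissonH lam pdf idx P y j ∂(P (thetaStarW lam pdf idx) x)))
    * piB lam pdf idx (thetaStarW lam pdf idx) x ∂lam

/-- Convergence in distribution of real random variables, expressed through
expectations of bounded continuous functions. -/
def CvgInDist {Ω : Type*} [MeasurableSpace Ω] (Pr : Measure Ω)
    (Z : ℕ → Ω → ℝ) (ν : Measure ℝ) : Prop :=
  ∀ g : ℝ → ℝ, Continuous g → (∃ C, ∀ x, |g x| ≤ C) →
    Tendsto (fun n => ∫ ω, g (Z n ω) ∂Pr) atTop (𝓝 (∫ x, g x ∂ν))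


lemma myFDeriv {d : ℕ} (ts : Fin d → ℝ) (hts : ∀ i, 0 < ts i)
    (t : Fin d → ℝ) (ht : ∀ i, 0 < t i) :
    HasFDerivAt (fun t' : Fin d → ℝ => ∑ i, ts i * Real.log (ts i / t' i))
      (∑ i, (-(ts i / t i)) • (ContinuousLinearMap.proj i : (Fin d → ℝ) →L[ℝ] ℝ)) t := by
  apply HasFDerivAt.fun_sum
  intro i _
  have h1 : HasDerivAt (fun x : ℝ => ts i * Real.log (ts i / x)) (-(ts i / t i)) (t i) := by
    have hx : t i ≠ 0 := (ht i).ne'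
    have hts' : ts i ≠ 0 := (hts i).ne'
    have hdiv : HasDerivAt (fun x : ℝ => ts i / x) (ts i * (-(t i ^ 2)⁻¹)) (t i) := by
      simpa [div_eq_mul_inv] using (hasDerivAt_inv hx).const_mul (ts i)
    have hlog := hdiv.log (by positivity)
    have := hlog.const_mul (ts i)
    convert this using 1
    · rfl
    · rfl
    field_simp
  have hp : HasFDerivAt (fun t' : Fin d → ℝ => t' i)
      (ContinuousLinearMap.proj i : (Fin d → ℝ) →L[ℝ] ℝ) t :=
    (ContinuousLinearMap.proj i : (Fin d → ℝ) →L[ℝ] ℝ).hasFDerivAt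
  exact (h1.comp_hasFDerivAt t hp :)

theorem wang_landau_lyapunov_derivative
    (d : ℕ) (hd : 2 ≤ d)
    (ts : Fin d → ℝ) (hts_pos : ∀ i, 0 < ts i) (hts_sum : ∑ i, ts i = 1) :
    ∀ t ∈ simplexInt d,
      fderiv ℝ (fun t' : Fin d → ℝ => ∑ i, ts i * Real.log (ts i / t' i)) t
          (fun i => (∑ j, ts j / t j)⁻¹ * (ts i - t i))
        = - (∑ j, ts j / t j)⁻¹ * ∑ i, (ts i - t i) ^ 2 / t i ∧
      fderiv ℝ (fun t' : Fin d → ℝ => ∑ i, ts i * Real.log (ts i / t' i)) t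
          (fun i => (∑ j, ts j / t j)⁻¹ * (ts i - t i)) ≤ 0 ∧
      (fderiv ℝ (fun t' : Fin d → ℝ => ∑ i, ts i * Real.log (ts i / t' i)) t
          (fun i => (∑ j, ts j / t j)⁻¹ * (ts i - t i)) = 0 ↔ t = ts) := by
  intro t ht
  obtain ⟨ht01, ht_sum⟩ := ht
  have ht_pos : ∀ i, 0 < t i := fun i => (ht01 i).1
  have hF := myFDeriv ts hts_pos t ht_pos
  set c : ℝ := (∑ j, ts j / t j)⁻¹ with hc
  have hcpos : 0 < c := by
    have : 0 < ∑ j, ts j / t j := by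
      apply Finset.sum_pos (fun j _ => div_pos (hts_pos j) (ht_pos j))
      exact Finset.univ_nonempty_iff.mpr (Fin.pos_iff_nonempty.mp (by omega))
    positivity
  set S : ℝ := ∑ i, (ts i - t i) ^ 2 / t i with hS
  have happ : fderiv ℝ (fun t' : Fin d → ℝ => ∑ i, ts i * Real.log (ts i / t' i)) t
      (fun i => c * (ts i - t i)) = - c * S := by
    rw [hF.fderiv]
    have : (∑ i, (-(ts i / t i)) • (ContinuousLinearMap.proj i : (Fin d → ℝ) →L[ℝ] ℝ))
        (fun i => c * (ts i - t i)) = ∑ i, (-(ts i / t i)) * (c * (ts i - t i)) := by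
      simp [ContinuousLinearMap.sum_apply]
    rw [this]
    have key : ∀ i : Fin d, (ts i - t i) ^ 2 / t i
        = ts i * (ts i - t i) / t i - (ts i - t i) := by
      intro i
      field_simp [(ht_pos i).ne']
    have hsum0 : ∑ i, (ts i - t i) = 0 := by
      rw [Finset.sum_sub_distrib, hts_sum, ht_sum]; ring
    have hS' : S = ∑ i, ts i * (ts i - t i) / t i := by
      rw [hS]
      simp_rw [key]
      rw [Finset.sum_sub_distrib, hsum0, sub_zero]
    rw [hS', Finset.mul_sum]
    apply Finset.sum_congr rfl
    intro i _
    field_simp [(ht_pos i).ne']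
  have hSnn : 0 ≤ S := Finset.sum_nonneg fun i _ => div_nonneg (sq_nonneg _) (ht_pos i).le
  refine ⟨happ, ?_, ?_⟩
  · rw [happ]
    have : 0 ≤ c * S := mul_nonneg hcpos.le hSnn
    linarith
  · rw [happ]
    constructor
    · intro h0
      have hS0 : S = 0 := by
        have : c * S = 0 := by linarith
        exact (mul_eq_zero.mp this).resolve_left hcpos.ne'
      have := (Finset.sum_eq_zero_iff_of_nonneg (fun i _ => div_nonneg (sq_nonneg _) (ht_pos i).le : ∀ i ∈ Finset.univ, (0:ℝ) ≤ (ts i - t i) ^ 2 / t i)).mp hS0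
      funext i
      have hi := this i (Finset.mem_univ i)
      have : (ts i - t i) ^ 2 = 0 := by
        by_contra hne
        have : 0 < (ts i - t i) ^ 2 := lt_of_le_of_ne (sq_nonneg _) (Ne.symm hne)
        have : 0 < (ts i - t i) ^ 2 / t i := div_pos this (ht_pos i)
        linarith
      have := pow_eq_zero_iff (n := 2) (by norm_num) |>.mp this
      linarith
    · intro h
      subst h
      simp [hS]


end
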